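/- If two points p, q lie on the same side of an equilateral triangle T of side L with d(p,q) ≤ 2L/5, then the set of points x ∈ T with area(p,q,x) > (6/25)·area(T) has area at most (4/25)·area(T). -/

import Mathlib

open MeasureTheory

noncomputable def triArea (p q r : EuclideanSpace ℝ (Fin 2)) : ℝ :=
  (volume (convexHull ℝ ({p, q, r} : Set (EuclideanSpace ℝ (Fin 2))))).toReal

section Aux
open Set Pointwise
noncomputable section
local notation "E2" => EuclideanSpace ℝ (Fin 2)


def det2 (u v : E2) : ℝ := u 0 * v 1 - u 1 * v 0

def e₀ : E2 := (WithLp.equiv 2 (Fin 2 → ℝ)).symm ![1,0]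
def e₁ : E2 := (WithLp.equiv 2 (Fin 2 → ℝ)).symm ![0,1]

def Δ0 : Set E2 := convexHull ℝ {0, e₀, e₁}

lemma vol_hull (p q r : E2) :
    volume (convexHull ℝ ({p,q,r} : Set E2))
      = ENNReal.ofReal |det2 (q-p) (r-p)| * volume Δ0 := by
  set u := q - p
  set v := r - p
  set M : Matrix (Fin 2) (Fin 2) ℝ := !![u 0, v 0; u 1, v 1] with hM
  set f : E2 →ₗ[ℝ] E2 := Matrix.toEuclideanLin M with hf
  have hdet : LinearMap.det f = det2 u v := by
    rw [hf, Matrix.toEuclideanLin_eq_toLin, LinearMap.det_toLin, hM,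
      Matrix.det_fin_two_of, det2]
    ring
  have hfu : f e₀ = u := by
    ext i
    fin_cases i <;>
      simp [hf, e₀, Matrix.toEuclideanLin_apply_piLp_toLp, hM, Matrix.mulVec,
        dotProduct, Fin.sum_univ_two]
  have hfv : f e₁ = v := by
    ext i
    fin_cases i <;>
      simp [hf, e₁, Matrix.toEuclideanLin_apply_piLp_toLp, hM, Matrix.mulVec,
        dotProduct, Fin.sum_univ_two]
  have himg : convexHull ℝ ({p,q,r} : Set E2) = p +ᵥ (f '' Δ0) := by
    rw [Δ0, f.image_convexHull, ← convexHull_vadd]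
    congr 1
    simp only [image_insert_eq, image_singleton, map_zero, hfu, hfv]
    rw [show (p +ᵥ ({0, u, v} : Set E2)) = (fun y => p + y) '' {0, u, v} from rfl]
    simp only [image_insert_eq, image_singleton, add_zero]
    congr 2
    · show q = p + (q - p); abel
    · show ({r} : Set E2) = {p + (r - p)}; congr 1; abel
  rw [himg, measure_vadd, Measure.addHaar_image_linearMap, hdet]



lemma mem_hull_iff (X Y Z x : E2) :
    x ∈ convexHull ℝ ({X,Y,Z} : Set E2) ↔
      ∃ a b : ℝ, 0 ≤ a ∧ 0 ≤ b ∧ a + b ≤ 1 ∧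
        x = X + a • (Y - X) + b • (Z - X) := by
  constructor
  · intro hx
    rw [show ({X,Y,Z} : Set E2) = insert X {Y,Z} from rfl,
      convexHull_insert ⟨Y, by simp⟩, convexHull_pair] at hx
    rw [mem_convexJoin] at hx
    obtain ⟨x', hx', w, hw, hxw⟩ := hx
    rw [mem_singleton_iff] at hx'
    subst hx'
    rw [segment_eq_image'] at hxw hw
    obtain ⟨d, ⟨hd0, hd1⟩, rfl⟩ := hw
    obtain ⟨c, ⟨hc0, hc1⟩, rfl⟩ := hxw
    refine ⟨c * (1 - d), c * d, mul_nonneg hc0 (by linarith), mul_nonneg hc0 hd0, by nlinarith, ?_⟩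
    module
  · rintro ⟨a, b, ha, hb, hab, rfl⟩
    rcases eq_or_lt_of_le (show (0:ℝ) ≤ a + b by positivity) with h0 | h0
    · have ha0 : a = 0 := by linarith
      have hb0 : b = 0 := by linarith
      rw [ha0, hb0]
      simpa using subset_convexHull ℝ ({X,Y,Z} : Set E2) (by simp)
    · set c := a + b with hc
      set w : E2 := Y + (b / c) • (Z - Y) with hw
      have hwmem : w ∈ convexHull ℝ ({X,Y,Z} : Set E2) := by
        have : w ∈ segment ℝ Y Z := by
          rw [segment_eq_image']
          exact ⟨b / c, ⟨by positivity, by rw [div_le_one h0]; linarith⟩, rfl⟩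
        have hsub : segment ℝ Y Z ⊆ convexHull ℝ ({X,Y,Z} : Set E2) := by
          rw [← convexHull_pair]
          exact convexHull_mono (by intro y hy; simp at hy; rcases hy with h|h <;> simp [h])
        exact hsub this
      have hXmem : X ∈ convexHull ℝ ({X,Y,Z} : Set E2) :=
        subset_convexHull ℝ _ (by simp)
      have hseg : X + a • (Y - X) + b • (Z - X) ∈ segment ℝ X w := by
        rw [segment_eq_image']
        refine ⟨c, ⟨by positivity, hab⟩, ?_⟩
        rw [hw]
        have hbc : c * (b / c) = b := by field_simp
        match_scalars <;> field_simp <;> ring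
      exact (convex_convexHull ℝ _).segment_subset hXmem hwmem hseg





lemma vol_delta_ne_top : volume Δ0 ≠ ⊤ :=
  (((Set.finite_singleton e₁).insert e₀ |>.insert 0).isCompact_convexHull ℝ).measure_lt_top.ne

lemma triArea_eq (p q r : E2) :
    triArea p q r = |det2 (q-p) (r-p)| * (volume Δ0).toReal := by
  rw [triArea, vol_hull, ENNReal.toReal_mul, ENNReal.toReal_ofReal (abs_nonneg _)]

lemma det2_smul_comb (c a b : ℝ) (u v : E2) :
    det2 (c • u) (a • u + b • v) = c * b * det2 u v := by
  simp only [det2, PiLp.smul_apply, PiLp.add_apply, smul_eq_mul]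
  ring

lemma key (L : ℝ) (hL : 0 < L) (X Y Z : E2)
    (p q : E2) (hp : p ∈ segment ℝ X Y) (hq : q ∈ segment ℝ X Y)
    (hd : dist p q ≤ 2 * L / 5) (hXY : dist X Y = L) :
    (volume {x ∈ convexHull ℝ ({X,Y,Z} : Set E2) |
        6 / 25 * triArea X Y Z < triArea p q x}).toReal ≤ 4 / 25 * triArea X Y Z := by
  set u := Y - X with hu
  set v := Z - X with hv
  have hnu : ‖u‖ = L := by rw [hu, norm_sub_rev, ← dist_eq_norm, hXY]
  rw [segment_eq_image'] at hp hq
  obtain ⟨s, ⟨hs0, hs1⟩, rfl⟩ := hp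
  obtain ⟨t, ⟨ht0, ht1⟩, rfl⟩ := hq
  have hts : |t - s| ≤ 2 / 5 := by
    have : dist (X + s • u) (X + t • u) = |s - t| * L := by
      rw [dist_eq_norm, show X + s • u - (X + t • u) = (s - t) • u by module,
        norm_smul, hnu, Real.norm_eq_abs]
    rw [this] at hd
    rw [abs_sub_comm]
    calc |s - t| = |s - t| * L / L := by field_simp
      _ ≤ (2 * L / 5) / L := by gcongr
      _ = 2 / 5 := by field_simp
  set A := triArea X Y Z with hA
  have hA0 : 0 ≤ A := by rw [hA, triArea_eq]; positivity
  have hAuv : A = |det2 u v| * (volume Δ0).toReal := by rw [hA, triArea_eq]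
  -- the containment
  have hsub : {x ∈ convexHull ℝ ({X,Y,Z} : Set E2) |
      6 / 25 * A < triArea (X + s • u) (X + t • u) x}
      ⊆ AffineMap.homothety Z (2/5 : ℝ) '' (convexHull ℝ ({X,Y,Z} : Set E2)) := by
    rintro x ⟨hxT, hxA⟩
    obtain ⟨a, b, ha, hb, hab, rfl⟩ := (mem_hull_iff X Y Z x).mp hxT
    have harea : triArea (X + s • u) (X + t • u) (X + a • u + b • v)
        = |t - s| * b * A := by
      rw [triArea_eq,
        show X + t • u - (X + s • u) = (t - s) • u by module,
        show X + a • u + b • v - (X + s • u) = (a - s) • u + b • v by module,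
        det2_smul_comb, hAuv]
      rw [abs_mul, abs_mul, abs_of_nonneg hb]
      ring
    rw [harea] at hxA
    have hb1 : b ≤ 1 := by linarith
    have hb35 : 3 / 5 < b := by
      by_contra hcon
      push_neg at hcon
      nlinarith [mul_nonneg (mul_nonneg (abs_nonneg (t-s)) hb) hA0,
        mul_le_mul_of_nonneg_right hts (mul_nonneg hb hA0)]
    refine ⟨X + ((5/2)*a) • u + ((5/2)*b - 3/2) • v, ?_, ?_⟩
    · exact (mem_hull_iff X Y Z _).mpr ⟨(5/2)*a, (5/2)*b - 3/2,
        by linarith, by linarith, by linarith, rfl⟩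
    · rw [AffineMap.homothety_apply]
      show (2/5 : ℝ) • (X + ((5/2)*a) • u + ((5/2)*b - 3/2) • v - Z) + Z
        = X + a • u + b • v
      rw [hv]
      module
  calc (volume {x ∈ convexHull ℝ ({X,Y,Z} : Set E2) |
          6 / 25 * A < triArea (X + s • u) (X + t • u) x}).toReal
      ≤ (volume (AffineMap.homothety Z (2/5 : ℝ) ''
          (convexHull ℝ ({X,Y,Z} : Set E2)))).toReal := by
        apply ENNReal.toReal_mono _ (measure_mono hsub)
        rw [Measure.addHaar_image_homothety]
        exact ENNReal.mul_ne_top ENNReal.ofReal_ne_top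
          (by rw [vol_hull]; exact ENNReal.mul_ne_top ENNReal.ofReal_ne_top vol_delta_ne_top)
    _ = 4 / 25 * A := by
        rw [Measure.addHaar_image_homothety, finrank_euclideanSpace_fin,
          ENNReal.toReal_mul, ENNReal.toReal_ofReal (by norm_num)]
        norm_num [hA, triArea]

end
end Aux

theorem stmt_12 (L : ℝ) (hL : 0 < L) (A B C : EuclideanSpace ℝ (Fin 2))
    (hAB : dist A B = L) (hBC : dist B C = L) (hAC : dist A C = L)
    (p q : EuclideanSpace ℝ (Fin 2))
    (hside : ∃ X Y : EuclideanSpace ℝ (Fin 2),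
      X ∈ ({A, B, C} : Set (EuclideanSpace ℝ (Fin 2))) ∧
      Y ∈ ({A, B, C} : Set (EuclideanSpace ℝ (Fin 2))) ∧ X ≠ Y ∧
      p ∈ segment ℝ X Y ∧ q ∈ segment ℝ X Y)
    (hd : dist p q ≤ 2 * L / 5) :
    (volume {x ∈ convexHull ℝ ({A, B, C} : Set (EuclideanSpace ℝ (Fin 2))) |
        6 / 25 * triArea A B C < triArea p q x}).toReal ≤ 4 / 25 * triArea A B C := by
  obtain ⟨X, Y, hX, hY, hne, hp, hq⟩ := hside
  simp only [Set.mem_insert_iff, Set.mem_singleton_iff] at hX hY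
  have main : ∀ Z : EuclideanSpace ℝ (Fin 2),
      ({A, B, C} : Set (EuclideanSpace ℝ (Fin 2))) = {X, Y, Z} → dist X Y = L →
      (volume {x ∈ convexHull ℝ ({A, B, C} : Set (EuclideanSpace ℝ (Fin 2))) |
        6 / 25 * triArea A B C < triArea p q x}).toReal ≤ 4 / 25 * triArea A B C := by
    intro Z hset hdist
    have htri : triArea A B C = triArea X Y Z := by unfold triArea; rw [hset]
    rw [hset, htri]
    exact key L hL X Y Z p q hp hq hd hdist
  rcases hX with rfl | rfl | rfl <;> rcases hY with rfl | rfl | rfl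
  · exact absurd rfl hne
  · exact main C rfl hAB
  · exact main B (by ext w; simp only [Set.mem_insert_iff, Set.mem_singleton_iff]; tauto) hAC
  · exact main C (by ext w; simp only [Set.mem_insert_iff, Set.mem_singleton_iff]; tauto)
      (by rw [dist_comm]; exact hAB)
  · exact absurd rfl hne
  · exact main A (by ext w; simp only [Set.mem_insert_iff, Set.mem_singleton_iff]; tauto) hBC
  · exact main B (by ext w; simp only [Set.mem_insert_iff, Set.mem_singleton_iff]; tauto)
      (by rw [dist_comm]; exact hAC)
  · exact main A (by ext w; simp only [Set.mem_insert_iff, Set.mem_singleton_iff]; tauto)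
      (by rw [dist_comm]; exact hBC)
  · exact absurd rfl hne
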